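/- arXiv:0804.2230 — 5 statements merged into one kernel-verified Lean document; each statement's English description precedes it below -/
import Mathlib

section
/- Let ρ > 0 and α ∈ [0, 2π), and suppose R, r ≥ 0 satisfy R + r = ρα and R = 2ρ sin(α/2). Then the circular-segment area A = (ρ²/2)(α − sin α) satisfies A ≤ (π/(3√2)) · r^{1/2} · (R + r)^{3/2}. -/
open Real

/-- `sin x ≥ x - x³/6` for `x ≥ 0`. -/
lemma aux_sin_ge_sub_cube {x : ℝ} (hx : 0 ≤ x) : x - x ^ 3 / 6 ≤ Real.sin x := by
  have hd : ∀ y : ℝ, HasDerivAt (fun t => Real.sin t - t + t ^ 3 / 6)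
      (Real.cos y - 1 + y ^ 2 / 2) y := by
    intro y
    have h := ((Real.hasDerivAt_sin y).sub (hasDerivAt_id y)).add
      ((hasDerivAt_pow 3 y).div_const 6)
    convert h using 1
    · rfl
    · rfl
    · funext t; rfl
    · push_cast; ring
  have hmono : MonotoneOn (fun t => Real.sin t - t + t ^ 3 / 6) (Set.Ici 0) := by
    apply monotoneOn_of_deriv_nonneg (convex_Ici 0)
      (Continuous.continuousOn (by continuity))
    · intro y _
      exact (hd y).differentiableAt.differentiableWithinAt
    · intro y _
      rw [(hd y).deriv]
      nlinarith [Real.one_sub_sq_div_two_le_cos (x := y)]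
  have h0 : (fun t => Real.sin t - t + t ^ 3 / 6) 0 ≤
      (fun t => Real.sin t - t + t ^ 3 / 6) x :=
    hmono (Set.self_mem_Ici) hx hx
  simp at h0
  linarith

/-- `x - sin x ≥ x³/(2π²)` on `[0, π]`. -/
lemma aux_sub_sin_ge {x : ℝ} (hx : 0 ≤ x) (hx' : x ≤ Real.pi) :
    x ^ 3 / (2 * Real.pi ^ 2) ≤ x - Real.sin x := by
  have hπ := Real.pi_pos
  have hd : ∀ y : ℝ, HasDerivAt (fun t => t - Real.sin t - t ^ 3 / (2 * Real.pi ^ 2))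
      (1 - Real.cos y - 3 * y ^ 2 / (2 * Real.pi ^ 2)) y := by
    intro y
    have h := ((hasDerivAt_id y).sub (Real.hasDerivAt_sin y)).sub
      ((hasDerivAt_pow 3 y).div_const (2 * Real.pi ^ 2))
    convert h using 1
    · rfl
    · rfl
    · funext t; rfl
    · push_cast; ring
  have hmono : MonotoneOn (fun t => t - Real.sin t - t ^ 3 / (2 * Real.pi ^ 2))
      (Set.Icc 0 Real.pi) := by
    apply monotoneOn_of_deriv_nonneg (convex_Icc 0 Real.pi)
      (Continuous.continuousOn (by continuity))
    · intro y _
      exact (hd y).differentiableAt.differentiableWithinAt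
    · intro y hy
      rw [interior_Icc] at hy
      rw [(hd y).deriv]
      have hyabs : |y| ≤ Real.pi := by
        rw [abs_of_nonneg hy.1.le]; exact hy.2.le
      have := Real.cos_le_one_sub_mul_cos_sq hyabs
      have h2 : 2 / Real.pi ^ 2 * y ^ 2 - 3 * y ^ 2 / (2 * Real.pi ^ 2) =
          y ^ 2 / (2 * Real.pi ^ 2) := by field_simp; ring
      nlinarith [sq_nonneg y, div_nonneg (sq_nonneg y) (by positivity : (0:ℝ) ≤ 2 * Real.pi ^ 2)]
  have h0 : (fun t => t - Real.sin t - t ^ 3 / (2 * Real.pi ^ 2)) 0 ≤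
      (fun t => t - Real.sin t - t ^ 3 / (2 * Real.pi ^ 2)) x :=
    hmono (Set.mem_Icc.mpr ⟨le_refl 0, hπ.le⟩) (Set.mem_Icc.mpr ⟨hx, hx'⟩) hx
  simp at h0
  linarith

/-- Isoperimetric estimate for a circular segment: if `ρ > 0`, `α ∈ [0, 2π)`,
`R, r ≥ 0` satisfy `R + r = ρ α` and `R = 2 ρ sin (α/2)`, then the area
`A = (ρ²/2)(α − sin α)` satisfies `A ≤ (π/(3√2)) · √r · (R+r)^{3/2}`. -/
theorem circular_segment_area_bound (ρ α R r A : ℝ)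
    (hρ : 0 < ρ) (hα₀ : 0 ≤ α) (hα₁ : α < 2 * Real.pi)
    (hR : 0 ≤ R) (hr : 0 ≤ r)
    (hlen : R + r = ρ * α)
    (hchord : R = 2 * ρ * Real.sin (α / 2))
    (hA : A = ρ ^ 2 / 2 * (α - Real.sin α)) :
    A ≤ Real.pi / (3 * Real.sqrt 2) * Real.sqrt r * (R + r) ^ ((3 : ℝ) / 2) := by
  have hπ := Real.pi_pos
  -- key inequality 1 : ρ α³ ≤ 8 π² r
  have hx0 : 0 ≤ α / 2 := by linarith
  have hx1 : α / 2 ≤ Real.pi := by linarith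
  have hsub := aux_sub_sin_ge hx0 hx1
  have hrval : r = 2 * ρ * (α / 2 - Real.sin (α / 2)) := by
    have : r = ρ * α - R := by linarith
    rw [this, hchord]; ring
  have key1 : ρ * α ^ 3 ≤ 8 * Real.pi ^ 2 * r := by
    rw [hrval]
    have h := mul_le_mul_of_nonneg_left hsub (by positivity : (0:ℝ) ≤ 2 * ρ)
    have heq : 2 * ρ * ((α / 2) ^ 3 / (2 * Real.pi ^ 2)) = ρ * α ^ 3 / (8 * Real.pi ^ 2) := by
      field_simp; ring
    rw [heq] at h
    have h8 : (0:ℝ) < 8 * Real.pi ^ 2 := by positivity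
    calc ρ * α ^ 3 = ρ * α ^ 3 / (8 * Real.pi ^ 2) * (8 * Real.pi ^ 2) := by field_simp
      _ ≤ 2 * ρ * (α / 2 - Real.sin (α / 2)) * (8 * Real.pi ^ 2) :=
          mul_le_mul_of_nonneg_right h h8.le
      _ = 8 * Real.pi ^ 2 * (2 * ρ * (α / 2 - Real.sin (α / 2))) := by ring
  -- key inequality 2 : A ≤ ρ² α³ / 12 and 0 ≤ A
  have hsin_lb := aux_sin_ge_sub_cube hα₀
  have hsin_ub : Real.sin α ≤ α := by
    calc Real.sin α ≤ |Real.sin α| := le_abs_self _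
      _ ≤ |α| := Real.abs_sin_le_abs
      _ = α := abs_of_nonneg hα₀
  have hA_ub : A ≤ ρ ^ 2 * α ^ 3 / 12 := by rw [hA]; nlinarith
  have hA_nn : 0 ≤ A := by rw [hA]; nlinarith
  -- rewrite the RHS as a single square root
  rw [hlen]
  have hs : 0 ≤ ρ * α := by positivity
  have hrpow : (ρ * α) ^ ((3 : ℝ) / 2) = Real.sqrt ((ρ * α) ^ 3) := by
    rw [show ((3:ℝ)/2) = (3 : ℕ) * (1/2 : ℝ) by push_cast; norm_num,
      Real.rpow_natCast_mul hs, ← Real.sqrt_eq_rpow]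
  have hcoef : Real.pi / (3 * Real.sqrt 2) = Real.sqrt (Real.pi ^ 2 / 18) := by
    rw [show Real.pi ^ 2 / 18 = (Real.pi / (3 * Real.sqrt 2)) ^ 2 by
      rw [div_pow, mul_pow, Real.sq_sqrt (by norm_num : (0:ℝ) ≤ 2)]; norm_num]
    rw [Real.sqrt_sq (by positivity)]
  rw [hrpow, hcoef, ← Real.sqrt_mul (by positivity) r, ← Real.sqrt_mul (by positivity)]
  apply Real.le_sqrt_of_sq_le
  have hcube : (ρ * α) ^ 3 = ρ ^ 3 * α ^ 3 := by ring
  rw [hcube]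
  nlinarith [mul_le_mul_of_nonneg_left key1
      (by positivity : (0:ℝ) ≤ ρ ^ 3 * α ^ 3 / 144),
    mul_le_mul hA_ub hA_ub hA_nn (by positivity : (0:ℝ) ≤ ρ ^ 2 * α ^ 3 / 12)]
end

section
/- Let f and (f_n)_{n≥1} be measurable functions from [0,1] to the unit sphere of ℝ^N. If the primitives of f_n converge uniformly to the primitive of f, i.e. sup_{t∈[0,1]} ‖∫₀ᵗ f_n(s) ds − ∫₀ᵗ f(s) ds‖ → 0, then f_n converges to f in L¹: ∫₀¹ ‖f_n(t) − f(t)‖ dt → 0. -/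
open MeasureTheory Filter intervalIntegral Set

lemma aux_intervalIntegrable {E : Type*} [NormedAddCommGroup E] {h : ℝ → E}
    (hm : AEStronglyMeasurable h volume)
    {C : ℝ} (hb : ∀ t ∈ Set.Icc (0:ℝ) 1, ‖h t‖ ≤ C)
    {a b : ℝ} (ha : a ∈ Set.Icc (0:ℝ) 1) (hbb : b ∈ Set.Icc (0:ℝ) 1) :
    IntervalIntegrable h volume a b := by
  rw [intervalIntegrable_iff]
  have hsub : Set.uIoc a b ⊆ Set.Icc 0 1 :=
    Set.uIoc_subset_uIcc.trans (Set.uIcc_subset_Icc ha hbb)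
  refine Measure.integrableOn_of_bounded ?_ hm
    (ae_restrict_of_forall_mem measurableSet_uIoc fun x hx => hb x (hsub hx))
  exact (measure_mono hsub |>.trans_lt (by simp)).ne

lemma aux_pointwise {E : Type*} [NormedAddCommGroup E] [InnerProductSpace ℝ E]
    {x y : E} (hx : ‖x‖ = 1) (hy : ‖y‖ = 1) {ε : ℝ} (hε : 0 < ε) :
    ‖x - y‖ ≤ ε - (inner ℝ (y : E) (x - y) : ℝ) / (2 * ε) := by
  have h1 : ‖x - y‖ ^ 2 = -2 * (inner ℝ (y : E) (x - y) : ℝ) := by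
    have h0 := norm_sub_sq_real x y
    have h2 : (inner ℝ (y : E) (x - y) : ℝ) = inner ℝ (y : E) x - 1 := by
      rw [inner_sub_right, real_inner_self_eq_norm_sq, hy]; ring_nf
    rw [h2, hx, hy] at *
    nlinarith [real_inner_comm x y]
  have hd : (inner ℝ (y : E) (x - y) : ℝ) = -(‖x - y‖ ^ 2) / 2 := by linarith
  rw [hd]
  have h4 : -(‖x - y‖ ^ 2) / 2 / (2 * ε) = -(‖x - y‖ ^ 2 / (4 * ε)) := by ring
  rw [h4, sub_neg_eq_add, ← sub_le_iff_le_add', le_div_iff₀ (by positivity)]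
  nlinarith [sq_nonneg (‖x - y‖ - 2 * ε)]

lemma weak_tendsto {E : Type*} [NormedAddCommGroup E] [InnerProductSpace ℝ E] [CompleteSpace E]
    (f : ℝ → E) (u : ℕ → ℝ → E)
    (hfm : AEStronglyMeasurable f volume) (hum : ∀ n, AEStronglyMeasurable (u n) volume)
    (hfb : ∀ t ∈ Set.Icc (0:ℝ) 1, ‖f t‖ ≤ 1)
    (hub : ∀ n, ∀ t ∈ Set.Icc (0:ℝ) 1, ‖u n t‖ ≤ 2)
    (hV : Tendsto (fun n => ⨆ t : Set.Icc (0:ℝ) 1, ‖∫ s in (0:ℝ)..(t:ℝ), u n s‖)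
      atTop (nhds 0)) :
    Tendsto (fun n => ∫ t in (0:ℝ)..1, (inner ℝ (f t) (u n t) : ℝ)) atTop (nhds 0) := by
  have h01 : (0:ℝ) ∈ Icc (0:ℝ) 1 := by norm_num
  have h11 : (1:ℝ) ∈ Icc (0:ℝ) 1 := by norm_num
  set e : ℕ → ℝ := fun n => ⨆ t : Set.Icc (0:ℝ) 1, ‖∫ s in (0:ℝ)..(t:ℝ), u n s‖ with he
  have hVle : ∀ n, ∀ t ∈ Icc (0:ℝ) 1, ‖∫ s in (0:ℝ)..t, u n s‖ ≤ e n := by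
    intro n t ht
    have hbdd : BddAbove (Set.range fun t : Set.Icc (0:ℝ) 1 =>
        ‖∫ s in (0:ℝ)..(t:ℝ), u n s‖) := by
      refine ⟨2, ?_⟩
      rintro x ⟨⟨t, ht⟩, rfl⟩
      have h1 : ‖∫ s in (0:ℝ)..t, u n s‖ ≤ 2 * |t - 0| := by
        refine intervalIntegral.norm_integral_le_of_norm_le_const fun x hx => hub n x ?_
        exact (Set.uIoc_subset_uIcc.trans (Set.uIcc_subset_Icc h01 ht)) hx
      have : |t - 0| ≤ 1 := by rw [sub_zero, abs_of_nonneg ht.1]; exact ht.2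
      nlinarith
    exact le_ciSup hbdd (⟨t, ht⟩ : Set.Icc (0:ℝ) 1)
  rw [Metric.tendsto_atTop] at hV ⊢
  intro ε hε
  have hε8 : (0:ℝ) < ε/8 := by positivity
  -- approximate f by a continuous compactly supported g
  have hfint : IntegrableOn f (Ioc (0:ℝ) 1) volume := by
    refine Measure.integrableOn_of_bounded (by simp) hfm
      (ae_restrict_of_forall_mem measurableSet_Ioc fun x hx => hfb x ⟨hx.1.le, hx.2⟩)
  have hf' : Integrable ((Ioc (0:ℝ) 1).indicator f) volume :=
    hfint.integrable_indicator measurableSet_Ioc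
  obtain ⟨g, hgsupp, hgapprox, hgcont, hgint⟩ :=
    hf'.exists_hasCompactSupport_integral_sub_le hε8
  have hfg : ∫ t in Ioc (0:ℝ) 1, ‖f t - g t‖ ≤ ε/8 := by
    have h1 : EqOn (fun x => ‖f x - g x‖)
        (fun x => ‖(Ioc (0:ℝ) 1).indicator f x - g x‖) (Ioc (0:ℝ) 1) := fun x hx => by
      simp only [Set.indicator_of_mem hx]
    rw [setIntegral_congr_fun measurableSet_Ioc h1]
    exact le_trans (setIntegral_le_integral ((hf'.sub hgint).norm)
      (Eventually.of_forall fun x => norm_nonneg _)) hgapprox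
  obtain ⟨Cg, hCg⟩ := hgsupp.exists_bound_of_continuous hgcont
  set M : ℝ := max Cg 1 with hMdef
  have hM1 : (1:ℝ) ≤ M := le_max_right _ _
  have hMg : ∀ x, ‖g x‖ ≤ M := fun x => (hCg x).trans (le_max_left _ _)
  have hM0 : (0:ℝ) < M := lt_of_lt_of_le one_pos hM1
  have hguc := hgsupp.uniformContinuous_of_continuous hgcont
  rw [Metric.uniformContinuous_iff] at hguc
  obtain ⟨δ, hδ0, hδ⟩ := hguc (ε/8) hε8
  obtain ⟨k, hk⟩ := exists_nat_one_div_lt hδ0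
  set a : ℕ → ℝ := fun i => (i:ℝ)/((k:ℝ)+1) with ha_def
  have hk1 : (0:ℝ) < (k:ℝ)+1 := by positivity
  have ha_mem : ∀ i, i ≤ k+1 → a i ∈ Icc (0:ℝ) 1 := by
    intro i hi
    refine ⟨by positivity, ?_⟩
    rw [div_le_one hk1]
    exact_mod_cast hi
  have ha0 : a 0 = 0 := by simp [ha_def]
  have ha1 : a (k+1) = 1 := by simp only [ha_def]; push_cast; exact div_self hk1.ne'
  have hstep : ∀ i, a (i+1) - a i = 1/((k:ℝ)+1) := by
    intro i; simp only [ha_def]; push_cast; ring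
  have hmono : ∀ i, a i ≤ a (i+1) := by
    intro i
    have := hstep i
    have : (0:ℝ) < 1/((k:ℝ)+1) := by positivity
    linarith [hstep i]
  set εs : ℝ := ε/(8*((k:ℝ)+1)*M) with hεs
  obtain ⟨Nn, hNn⟩ := hV εs (by positivity)
  refine ⟨Nn, fun n hn => ?_⟩
  have hen : e n < εs := by
    have := hNn n hn
    rw [Real.dist_eq, sub_zero] at this
    exact (le_abs_self _).trans_lt this
  have huin : ∀ {p q : ℝ}, p ∈ Icc (0:ℝ) 1 → q ∈ Icc (0:ℝ) 1 →
      IntervalIntegrable (u n) volume p q := fun hp hq =>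
    aux_intervalIntegrable (hum n) (hub n) hp hq
  have hgii : ∀ {p q : ℝ}, p ∈ Icc (0:ℝ) 1 → q ∈ Icc (0:ℝ) 1 →
      IntervalIntegrable (fun t => (inner ℝ (g t) (u n t) : ℝ)) volume p q := by
    intro p q hp hq
    refine aux_intervalIntegrable (hgcont.aestronglyMeasurable.inner (hum n))
      (C := M*2) (fun t ht => ?_) hp hq
    exact (norm_inner_le_norm _ _).trans
      (mul_le_mul (hMg t) (hub n t ht) (norm_nonneg _) hM0.le)
  have hfii : ∀ {p q : ℝ}, p ∈ Icc (0:ℝ) 1 → q ∈ Icc (0:ℝ) 1 →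
      IntervalIntegrable (fun t => (inner ℝ (f t) (u n t) : ℝ)) volume p q := by
    intro p q hp hq
    refine aux_intervalIntegrable (hfm.inner (hum n)) (C := 1*2) (fun t ht => ?_) hp hq
    exact (norm_inner_le_norm _ _).trans
      (mul_le_mul (hfb t ht) (hub n t ht) (norm_nonneg _) one_pos.le)
  set Bn : ℝ := ∫ t in (0:ℝ)..1, (inner ℝ (f t) (u n t) : ℝ) with hBn
  set Cn : ℝ := ∫ t in (0:ℝ)..1, (inner ℝ (g t) (u n t) : ℝ) with hCn
  -- step 1 : |Bn - Cn| ≤ ε/4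
  have hBC : |Bn - Cn| ≤ ε/4 := by
    have hsub : Bn - Cn = ∫ t in Ioc (0:ℝ) 1, (inner ℝ (f t - g t) (u n t) : ℝ) := by
      rw [hBn, hCn, ← intervalIntegral.integral_sub (hfii h01 h11) (hgii h01 h11),
        intervalIntegral.integral_of_le zero_le_one]
      congr 1; funext t; rw [inner_sub_left]
    rw [hsub]
    have hfgint : IntegrableOn (fun t => ‖f t - g t‖) (Ioc (0:ℝ) 1) volume :=
      (hfint.sub hgint.integrableOn).norm
    have hRint : IntegrableOn (fun t => 2 * ‖f t - g t‖) (Ioc (0:ℝ) 1) volume :=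
      hfgint.const_mul 2
    have hmeas : AEStronglyMeasurable (fun t => (inner ℝ (f t - g t) (u n t) : ℝ)) volume :=
      (hfm.sub hgcont.aestronglyMeasurable).inner (hum n)
    have hLint : IntegrableOn (fun t => (inner ℝ (f t - g t) (u n t) : ℝ)) (Ioc (0:ℝ) 1)
        volume := by
      refine Integrable.mono' hRint hmeas.restrict ?_
      refine ae_restrict_of_forall_mem measurableSet_Ioc fun x hx => ?_
      have hx' : x ∈ Icc (0:ℝ) 1 := ⟨hx.1.le, hx.2⟩
      calc ‖(inner ℝ (f x - g x) (u n x) : ℝ)‖ ≤ ‖f x - g x‖ * ‖u n x‖ :=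
            norm_inner_le_norm _ _
        _ ≤ ‖f x - g x‖ * 2 :=
            mul_le_mul_of_nonneg_left (hub n x hx') (norm_nonneg _)
        _ = 2 * ‖f x - g x‖ := by ring
    rw [← Real.norm_eq_abs]
    calc ‖∫ t in Ioc (0:ℝ) 1, (inner ℝ (f t - g t) (u n t) : ℝ)‖
        ≤ ∫ t in Ioc (0:ℝ) 1, ‖(inner ℝ (f t - g t) (u n t) : ℝ)‖ :=
          MeasureTheory.norm_integral_le_integral_norm _
      _ ≤ ∫ t in Ioc (0:ℝ) 1, 2 * ‖f t - g t‖ := by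
          refine setIntegral_mono_on hLint.norm hRint measurableSet_Ioc fun x hx => ?_
          have hx' : x ∈ Icc (0:ℝ) 1 := ⟨hx.1.le, hx.2⟩
          calc ‖(inner ℝ (f x - g x) (u n x) : ℝ)‖ ≤ ‖f x - g x‖ * ‖u n x‖ :=
                norm_inner_le_norm _ _
            _ ≤ ‖f x - g x‖ * 2 :=
                mul_le_mul_of_nonneg_left (hub n x hx') (norm_nonneg _)
            _ = 2 * ‖f x - g x‖ := by ring
      _ = 2 * ∫ t in Ioc (0:ℝ) 1, ‖f t - g t‖ := integral_const_mul 2 _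
      _ ≤ 2 * (ε/8) := by linarith
      _ = ε/4 := by ring
  -- step 2 : split Cn into partition pieces
  have hCsum : Cn = ∑ i ∈ Finset.range (k+1),
      ∫ t in a i..a (i+1), (inner ℝ (g t) (u n t) : ℝ) := by
    have h := intervalIntegral.sum_integral_adjacent_intervals
      (a := a) (n := k+1) (μ := volume)
      (f := fun t => (inner ℝ (g t) (u n t) : ℝ)) (fun i hi =>
        hgii (ha_mem i (by omega)) (ha_mem (i+1) (by omega)))
    rw [ha0, ha1] at h
    exact h.symm
  have hterm : ∀ i ∈ Finset.range (k+1),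
      |∫ t in a i..a (i+1), (inner ℝ (g t) (u n t) : ℝ)|
        ≤ M * (2 * e n) + (ε/4) * (a (i+1) - a i) := by
    intro i hi
    rw [Finset.mem_range] at hi
    have hai := ha_mem i (by omega)
    have hai1 := ha_mem (i+1) (by omega)
    set c : E := g (a i) with hc
    have hconst_int : IntervalIntegrable (fun t => (inner ℝ c (u n t) : ℝ)) volume
        (a i) (a (i+1)) := by
      refine aux_intervalIntegrable (aestronglyMeasurable_const.inner (hum n))
        (C := M*2) (fun t ht => ?_) hai hai1
      exact (norm_inner_le_norm _ _).trans
        (mul_le_mul (hMg _) (hub n t ht) (norm_nonneg _) hM0.le)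
    have e1 : ∫ t in a i..a (i+1), (inner ℝ c (u n t) : ℝ)
        = (inner ℝ c (∫ t in a i..a (i+1), u n t) : ℝ) := by
      have := ContinuousLinearMap.intervalIntegral_comp_comm (innerSL ℝ c)
        (huin hai hai1)
      simpa using this
    have hdiff : ∫ t in a i..a (i+1), (inner ℝ (g t - c) (u n t) : ℝ)
        = (∫ t in a i..a (i+1), (inner ℝ (g t) (u n t) : ℝ))
          - (inner ℝ c (∫ t in a i..a (i+1), u n t) : ℝ) := by
      rw [← e1, ← intervalIntegral.integral_sub (hgii hai hai1) hconst_int]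
      congr 1; funext t; rw [inner_sub_left]
    have b1 : |(inner ℝ c (∫ t in a i..a (i+1), u n t) : ℝ)| ≤ M * (2 * e n) := by
      rw [← Real.norm_eq_abs]
      have hVsub : ∫ t in a i..a (i+1), u n t
          = (∫ t in (0:ℝ)..a (i+1), u n t) - ∫ t in (0:ℝ)..a i, u n t :=
        (intervalIntegral.integral_interval_sub_left (huin h01 hai1) (huin h01 hai)).symm
      have hnorm : ‖∫ t in a i..a (i+1), u n t‖ ≤ 2 * e n := by
        rw [hVsub]
        have A := hVle n _ hai1
        have B := hVle n _ hai
        calc ‖(∫ t in (0:ℝ)..a (i+1), u n t) - ∫ t in (0:ℝ)..a i, u n t‖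
            ≤ ‖∫ t in (0:ℝ)..a (i+1), u n t‖ + ‖∫ t in (0:ℝ)..a i, u n t‖ :=
              norm_sub_le _ _
          _ ≤ 2 * e n := by linarith
      exact (norm_inner_le_norm _ _).trans
        (mul_le_mul (hMg _) hnorm (norm_nonneg _) hM0.le)
    have b2 : |∫ t in a i..a (i+1), (inner ℝ (g t - c) (u n t) : ℝ)|
        ≤ (ε/4) * |a (i+1) - a i| := by
      rw [← Real.norm_eq_abs]
      refine intervalIntegral.norm_integral_le_of_norm_le_const fun x hx => ?_
      have hx' : x ∈ Icc (0:ℝ) 1 :=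
        (Set.uIoc_subset_uIcc.trans (Set.uIcc_subset_Icc hai hai1)) hx
      have hxm : x ∈ Ioc (a i) (a (i+1)) := by rwa [Set.uIoc_of_le (hmono i)] at hx
      have hxd : dist x (a i) < δ := by
        rw [Real.dist_eq, abs_of_pos (by linarith [hxm.1])]
        have : x - a i ≤ 1/((k:ℝ)+1) := by
          have := hstep i; linarith [hxm.2]
        linarith
      have hgx := hδ hxd
      rw [dist_eq_norm] at hgx
      calc ‖(inner ℝ (g x - c) (u n x) : ℝ)‖ ≤ ‖g x - c‖ * ‖u n x‖ :=
            norm_inner_le_norm _ _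
        _ ≤ (ε/8) * 2 :=
            mul_le_mul hgx.le (hub n x hx') (norm_nonneg _) hε8.le
        _ = ε/4 := by ring
    have habs : |a (i+1) - a i| = a (i+1) - a i := abs_of_nonneg (by linarith [hmono i])
    rw [hdiff, habs] at b2
    have := abs_sub_abs_le_abs_sub (∫ t in a i..a (i+1), (inner ℝ (g t) (u n t) : ℝ))
      ((inner ℝ c (∫ t in a i..a (i+1), u n t) : ℝ))
    have h5 := (abs_sub (∫ t in a i..a (i+1), (inner ℝ (g t) (u n t) : ℝ))
      ((inner ℝ c (∫ t in a i..a (i+1), u n t) : ℝ)))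
    calc |∫ t in a i..a (i+1), (inner ℝ (g t) (u n t) : ℝ)|
        = |(inner ℝ c (∫ t in a i..a (i+1), u n t) : ℝ)
            + ((∫ t in a i..a (i+1), (inner ℝ (g t) (u n t) : ℝ))
              - (inner ℝ c (∫ t in a i..a (i+1), u n t) : ℝ))| := by ring_nf
      _ ≤ |(inner ℝ c (∫ t in a i..a (i+1), u n t) : ℝ)|
            + |(∫ t in a i..a (i+1), (inner ℝ (g t) (u n t) : ℝ))
              - (inner ℝ c (∫ t in a i..a (i+1), u n t) : ℝ)| := abs_add_le _ _
      _ ≤ M * (2 * e n) + (ε/4) * (a (i+1) - a i) := by linarith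
  have hCb : |Cn| ≤ ((k:ℝ)+1) * (M * (2 * e n)) + ε/4 := by
    rw [hCsum]
    refine (Finset.abs_sum_le_sum_abs _ _).trans ?_
    refine (Finset.sum_le_sum hterm).trans ?_
    rw [Finset.sum_add_distrib, Finset.sum_const, Finset.card_range, ← Finset.mul_sum,
      Finset.sum_range_sub a (k+1), ha0, ha1]
    simp only [nsmul_eq_mul]
    push_cast
    ring_nf
    exact le_refl _
  have hfinal : ((k:ℝ)+1) * (M * (2 * e n)) < ε/4 := by
    have hpos : (0:ℝ) < ((k:ℝ)+1) * (2*M) := by positivity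
    calc ((k:ℝ)+1) * (M * (2 * e n)) = (((k:ℝ)+1) * (2*M)) * e n := by ring
      _ < (((k:ℝ)+1) * (2*M)) * εs := by exact mul_lt_mul_of_pos_left hen hpos
      _ = ε/4 := by rw [hεs]; field_simp; ring
  rw [Real.dist_eq, sub_zero]
  calc |Bn| ≤ |Bn - Cn| + |Cn| := by
        have := abs_add_le (Bn - Cn) Cn; simpa using this
    _ < ε/4 + (ε/4 + ε/4) := by linarith
    _ < ε := by linarith

/-- Let `f` and `(f_n)` be measurable functions from `[0,1]` to the unit sphere of
`ℝ^N`.  If the primitives of the `f_n` converge uniformly on `[0,1]` to the primitive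
of `f`, then `f_n → f` in `L¹`: `∫₀¹ ‖f_n(t) − f(t)‖ dt → 0`. -/
theorem tendsto_L1_of_uniform_convergence_of_primitives
    (N : ℕ) (f : ℝ → EuclideanSpace ℝ (Fin N)) (F : ℕ → ℝ → EuclideanSpace ℝ (Fin N))
    (hf : Measurable f) (hF : ∀ n, Measurable (F n))
    (hfnorm : ∀ t ∈ Set.Icc (0 : ℝ) 1, ‖f t‖ = 1)
    (hFnorm : ∀ n, ∀ t ∈ Set.Icc (0 : ℝ) 1, ‖F n t‖ = 1)
    (hconv : Tendsto
      (fun n => ⨆ t : Set.Icc (0 : ℝ) 1,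
        ‖(∫ s in (0 : ℝ)..(t : ℝ), F n s) - ∫ s in (0 : ℝ)..(t : ℝ), f s‖)
      atTop (nhds 0)) :
    Tendsto (fun n => ∫ t in (0 : ℝ)..1, ‖F n t - f t‖) atTop (nhds 0) := by
  have h01 : (0:ℝ) ∈ Icc (0:ℝ) 1 := by norm_num
  have h11 : (1:ℝ) ∈ Icc (0:ℝ) 1 := by norm_num
  have hfm : AEStronglyMeasurable f volume := hf.aestronglyMeasurable
  have hum : ∀ n, AEStronglyMeasurable (fun t => F n t - f t) volume := fun n =>
    ((hF n).sub hf).aestronglyMeasurable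
  have hfb : ∀ t ∈ Icc (0:ℝ) 1, ‖f t‖ ≤ 1 := fun t ht => (hfnorm t ht).le
  have hub : ∀ n, ∀ t ∈ Icc (0:ℝ) 1, ‖F n t - f t‖ ≤ 2 := by
    intro n t ht
    calc ‖F n t - f t‖ ≤ ‖F n t‖ + ‖f t‖ := norm_sub_le _ _
      _ ≤ 2 := by rw [hfnorm t ht, hFnorm n t ht]; norm_num
  have hV : Tendsto (fun n => ⨆ t : Set.Icc (0:ℝ) 1,
      ‖∫ s in (0:ℝ)..(t:ℝ), (F n s - f s)‖) atTop (nhds 0) := by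
    refine hconv.congr fun n => ?_
    congr 1; funext t; congr 1
    rw [intervalIntegral.integral_sub
      (aux_intervalIntegrable (hF n).aestronglyMeasurable
        (fun s hs => (hFnorm n s hs).le) h01 t.2)
      (aux_intervalIntegrable hfm hfb h01 t.2)]
  have hB := weak_tendsto f (fun n t => F n t - f t) hfm hum hfb hub hV
  rw [Metric.tendsto_atTop] at hB ⊢
  intro ε hε
  have hε'0 : (0:ℝ) < ε/2 := by positivity
  obtain ⟨Nn, hNn⟩ := hB ((ε/2)^2) (by positivity)
  refine ⟨Nn, fun n hn => ?_⟩
  have hBn : |∫ t in (0:ℝ)..1, (inner ℝ (f t) (F n t - f t) : ℝ)| < (ε/2)^2 := by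
    have := hNn n hn; rwa [Real.dist_eq, sub_zero] at this
  have hpt : ∀ t ∈ Icc (0:ℝ) 1,
      ‖F n t - f t‖ ≤ ε/2 - (inner ℝ (f t) (F n t - f t) : ℝ)/(2*(ε/2)) :=
    fun t ht => aux_pointwise (hFnorm n t ht) (hfnorm t ht) hε'0
  have hii_inner : IntervalIntegrable
      (fun t => (inner ℝ (f t) (F n t - f t) : ℝ)) volume 0 1 := by
    refine aux_intervalIntegrable (hfm.inner (hum n)) (C := 2) (fun t ht => ?_) h01 h11
    calc ‖(inner ℝ (f t) (F n t - f t) : ℝ)‖ ≤ ‖f t‖ * ‖F n t - f t‖ :=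
          norm_inner_le_norm _ _
      _ ≤ 1 * 2 := mul_le_mul (hfb t ht) (hub n t ht) (norm_nonneg _) one_pos.le
      _ = 2 := by norm_num
  have hii_norm : IntervalIntegrable (fun t => ‖F n t - f t‖) volume 0 1 :=
    (aux_intervalIntegrable (hum n) (hub n) h01 h11).norm
  have hii_rhs : IntervalIntegrable
      (fun t => ε/2 - (inner ℝ (f t) (F n t - f t) : ℝ)/(2*(ε/2))) volume 0 1 :=
    intervalIntegrable_const.sub (hii_inner.div_const _)
  have hmono := intervalIntegral.integral_mono_on zero_le_one hii_norm hii_rhs hpt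
  have hrhs : (∫ t in (0:ℝ)..1, (ε/2 - (inner ℝ (f t) (F n t - f t) : ℝ)/(2*(ε/2))))
      = ε/2 - (∫ t in (0:ℝ)..1, (inner ℝ (f t) (F n t - f t) : ℝ))/(2*(ε/2)) := by
    rw [intervalIntegral.integral_sub intervalIntegrable_const (hii_inner.div_const _),
      intervalIntegral.integral_const, intervalIntegral.integral_div]
    simp
  rw [Real.dist_eq, sub_zero, abs_of_nonneg
    (intervalIntegral.integral_nonneg zero_le_one fun t _ => norm_nonneg _)]
  have habs := abs_lt.1 hBn
  have hdivb : (-(∫ t in (0:ℝ)..1, (inner ℝ (f t) (F n t - f t) : ℝ)))/(2*(ε/2)) < ε/4 := by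
    rw [div_lt_iff₀ (by positivity)]
    nlinarith [habs.1]
  rw [hrhs] at hmono
  have heq : ε/2 - (∫ t in (0:ℝ)..1, (inner ℝ (f t) (F n t - f t) : ℝ))/(2*(ε/2))
      = ε/2 + (-(∫ t in (0:ℝ)..1, (inner ℝ (f t) (F n t - f t) : ℝ)))/(2*(ε/2)) := by ring
  rw [heq] at hmono
  linarith
end

section
/- Let G be a compact group, n ≥ 1, and 𝒪 a conjugacy class of G. Let δ_{𝒪(n)} be the unique probability measure on 𝒪(n) = {(x₁,…,x_n) ∈ Gⁿ : x₁⋯x_n ∈ 𝒪} invariant under the action (g₁,…,g_n)·(x₁,…,x_n) = (g₁x₁g₂⁻¹, …, g_n x_n g₁⁻¹). Then for every continuous f : Gⁿ → ℝ, ∫ f dδ_{𝒪(n)} = ∫_{Gⁿ} f(x₁,…,x_{n−1}, (x₁⋯x_{n−1})⁻¹ y) dx₁⋯dx_{n−1} δ_𝒪(dy), where δ_𝒪 is the invariant probability measure on 𝒪 and dx is Haar measure. -/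
open MeasureTheory

section AuxConjUnif

set_option linter.unusedSectionVars false

variable {G : Type*} [Group G] [TopologicalSpace G] [IsTopologicalGroup G] [CompactSpace G]
    [T2Space G] [SecondCountableTopology G] [MeasurableSpace G] [BorelSpace G]
    (haar : Measure G) [IsProbabilityMeasure haar] [haar.IsMulLeftInvariant]

private lemma myIsHaar : haar.IsHaarMeasure :=
  { toIsOpenPosMeasure := isOpenPosMeasure_of_mulLeftInvariant_of_compact
      Set.univ isCompact_univ (by simp) }

private lemma haar_map_mul_right (a : G) : Measure.map (· * a) haar = haar := by
  have hH : haar.IsHaarMeasure := myIsHaar haar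
  have h1 : IsProbabilityMeasure (Measure.map (· * a) haar) :=
    Measure.isProbabilityMeasure_map (measurable_mul_const a).aemeasurable
  have h2 : (Measure.map (· * a) haar).IsHaarMeasure :=
    { toIsOpenPosMeasure := isOpenPosMeasure_of_mulLeftInvariant_of_compact
        Set.univ isCompact_univ (by simp [Measure.map_apply (measurable_mul_const a) .univ]) }
  exact Measure.isHaarMeasure_eq_of_isProbabilityMeasure _ haar

private lemma haar_map_inv : Measure.map Inv.inv haar = haar := by
  have hH : haar.IsHaarMeasure := myIsHaar haar
  have h1 : IsProbabilityMeasure (Measure.map (Inv.inv : G → G) haar) :=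
    Measure.isProbabilityMeasure_map measurable_inv.aemeasurable
  have hli : (Measure.map (Inv.inv : G → G) haar).IsMulLeftInvariant := by
    constructor
    intro g
    rw [Measure.map_map (measurable_const_mul g) measurable_inv]
    have h0 : ((g * ·) ∘ (Inv.inv : G → G)) = (Inv.inv : G → G) ∘ (· * g⁻¹) := by
      ext t; simp [mul_comm]
    rw [h0, ← Measure.map_map measurable_inv (measurable_mul_const g⁻¹),
      haar_map_mul_right haar g⁻¹]
  have h2 : (Measure.map (Inv.inv : G → G) haar).IsHaarMeasure :=
    { toIsOpenPosMeasure := isOpenPosMeasure_of_mulLeftInvariant_of_compact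
        Set.univ isCompact_univ (by simp [Measure.map_apply measurable_inv .univ]) }
  exact Measure.isHaarMeasure_eq_of_isProbabilityMeasure _ haar

private lemma cont_integrable {X : Type*} [TopologicalSpace X] [CompactSpace X] [T2Space X]
    [MeasurableSpace X] [OpensMeasurableSpace X] (ρ : Measure X) [IsFiniteMeasure ρ]
    {φ : X → ℝ} (hφ : Continuous φ) : Integrable φ ρ :=
  hφ.integrable_of_hasCompactSupport (isClosed_tsupport _).isCompact

private lemma cont_param {X Y : Type*} [TopologicalSpace X] [TopologicalSpace Y]
    [CompactSpace X] [CompactSpace Y] [T2Space Y] [FirstCountableTopology X]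
    [MeasurableSpace Y] [OpensMeasurableSpace Y] (ρ : Measure Y) [IsFiniteMeasure ρ]
    {F : X → Y → ℝ} (hF : Continuous fun q : X × Y => F q.1 q.2) :
    Continuous fun x => ∫ y, F x y ∂ρ := by
  rcases isEmpty_or_nonempty Y with hY | hNY
  · have h0 : ρ = 0 := ρ.eq_zero_of_isEmpty
    simp only [h0, integral_zero_measure]
    exact continuous_const
  rcases isEmpty_or_nonempty X with hX | hNX
  · exact continuous_iff_continuousAt.2 fun x => (hX.false x).elim
  obtain ⟨q₀, hq₀⟩ := (hF.norm).exists_forall_ge' (Classical.arbitrary (X × Y))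
      (by simp [Filter.cocompact_eq_bot])
  refine continuous_of_dominated (bound := fun _ => ‖F q₀.1 q₀.2‖) ?_ ?_ ?_ ?_
  · exact fun x => ((hF.comp (Continuous.prodMk_right x)).aestronglyMeasurable)
  · exact fun x => Filter.Eventually.of_forall fun y => hq₀ (x, y)
  · exact integrable_const _
  · exact Filter.Eventually.of_forall fun y =>
      hF.comp (continuous_id.prodMk continuous_const)

private lemma cont_listProd (k : ℕ) : Continuous fun h : Fin k → G => (List.ofFn h).prod := by
  induction k with
  | zero => simpa using continuous_const
  | succ n ih =>
      have h0 : (fun h : Fin (n+1) → G => (List.ofFn h).prod)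
          = fun h => h 0 * (List.ofFn fun i : Fin n => h i.succ).prod := by
        funext h; rw [List.ofFn_succ, List.prod_cons]
      rw [h0]
      exact (continuous_apply 0).mul (ih.comp (by continuity))

private lemma cont_snoc (k : ℕ) :
    Continuous fun q : (Fin k → G) × G => (Fin.snoc q.1 q.2 : Fin (k+1) → G) := by
  refine continuous_pi fun i => ?_
  induction i using Fin.lastCases with
  | last => simp only [Fin.snoc_last]; exact continuous_snd
  | cast j => simp only [Fin.snoc_castSucc]; exact (continuous_apply j).comp continuous_fst

private lemma cont_cons_eval (k : ℕ) (i : Fin (k+1)) :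
    Continuous fun h : Fin k → G => (Fin.cons 1 h : Fin (k+1) → G) i := by
  induction i using Fin.cases with
  | zero => simp only [Fin.cons_zero]; exact continuous_const
  | succ j => simp only [Fin.cons_succ]; exact continuous_apply j

private lemma take_ofFn_eq {α : Type*} {k : ℕ} (h h' : Fin k → α) (j : ℕ)
    (hagree : ∀ i : Fin k, (i : ℕ) < j → h i = h' i) :
    (List.ofFn h).take j = (List.ofFn h').take j := by
  apply List.ext_getElem
  · simp
  · intro n h1 h2
    have hj : n < j := lt_of_lt_of_le h1 (by simp [List.length_take])
    simp only [List.getElem_take, List.getElem_ofFn]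
    exact hagree _ hj

private lemma haar_integral_inv_mul (c : G) {φ : G → ℝ} (hφ : Continuous φ) :
    ∫ t, φ (t⁻¹ * c) ∂haar = ∫ t, φ t ∂haar := by
  have hmap : Measure.map (fun t : G => t⁻¹ * c) haar = haar := by
    have h0 : (fun t : G => t⁻¹ * c) = (· * c) ∘ (Inv.inv : G → G) := rfl
    rw [h0, ← Measure.map_map (measurable_mul_const c) measurable_inv,
      haar_map_inv haar, haar_map_mul_right haar c]
  conv_rhs => rw [← hmap]
  rw [integral_map (measurable_inv.mul_const c).aemeasurable
    (hφ.aestronglyMeasurable)]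

private lemma haar_integral_mul_right (c : G) {φ : G → ℝ} (hφ : Continuous φ) :
    ∫ t, φ (t * c) ∂haar = ∫ t, φ t ∂haar := by
  conv_rhs => rw [← haar_map_mul_right haar c]
  rw [integral_map (measurable_mul_const c).aemeasurable hφ.aestronglyMeasurable]

private lemma tri (n : ℕ) :
    ∀ (B : Fin n → (Fin n → G) → G), (∀ j, Continuous (B j)) →
    (∀ (j : Fin n) (h h' : Fin n → G), (∀ i : Fin n, i < j → h i = h' i) → B j h = B j h') →
    ∀ (F : (Fin n → G) → ℝ), Continuous F →
    ∫ h, F (fun j => (h j)⁻¹ * B j h) ∂(Measure.pi fun _ : Fin n => haar)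
      = ∫ h, F h ∂(Measure.pi fun _ : Fin n => haar) := by
  induction n with
  | zero =>
      intro B hBc hBdep F hF
      have h0 : ∀ h : Fin 0 → G, (fun j => (h j)⁻¹ * B j h) = h :=
        fun h => funext fun j => j.elim0
      simp only [h0]
  | succ n ih =>
      intro B hBc hBdep F hF
      set Pn : Measure (Fin n → G) := Measure.pi fun _ => haar with hPn
      set Pn1 : Measure (Fin (n+1) → G) := Measure.pi fun _ => haar with hPn1
      set e := MeasurableEquiv.piFinSuccAbove (fun _ : Fin (n+1) => G) (Fin.last n) with he
      have mp : MeasurePreserving e Pn1 (haar.prod Pn) :=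
        measurePreserving_piFinSuccAbove (fun _ : Fin (n+1) => haar) (Fin.last n)
      have hsymm : ∀ (q : G × (Fin n → G)), e.symm q = Fin.snoc q.2 q.1 := by
        intro q
        show (Fin.insertNthEquiv (fun _ => G) (Fin.last n)) q = _
        rw [Fin.insertNthEquiv_last]
        rfl
      have hVcont : Continuous fun h : Fin (n+1) → G => F (fun j => (h j)⁻¹ * B j h) :=
        hF.comp (continuous_pi fun j => ((continuous_apply j).inv).mul (hBc j))
      have hBt : ∀ (j : Fin (n+1)) (k : Fin n → G) (t : G),
          B j (Fin.snoc k t) = B j (Fin.snoc k 1) := by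
        intro j k t
        apply hBdep
        intro i hij
        have hlast : i < Fin.last n := lt_of_lt_of_le hij (Fin.le_last j)
        have hlt : (i : ℕ) < n := by simpa [Fin.lt_def] using hlast
        have hi : i = Fin.castSucc ⟨(i : ℕ), hlt⟩ := by ext; simp
        rw [hi, Fin.snoc_castSucc, Fin.snoc_castSucc]
      have hVsnoc : ∀ (k : Fin n → G) (t : G),
          (fun j => ((Fin.snoc k t : Fin (n+1) → G) j)⁻¹ * B j (Fin.snoc k t)) = Fin.snoc
            (fun j' => (k j')⁻¹ * B (Fin.castSucc j') (Fin.snoc k 1))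
            (t⁻¹ * B (Fin.last n) (Fin.snoc k 1)) := by
        intro k t
        funext j
        induction j using Fin.lastCases with
        | last => simp only [Fin.snoc_last, hBt]
        | cast j' => simp only [Fin.snoc_castSucc, hBt]
      have hsnoc1 : Continuous fun k : Fin n → G => (Fin.snoc k (1:G) : Fin (n+1) → G) :=
        (cont_snoc n).comp (continuous_id.prodMk continuous_const)
      set Gt : (Fin n → G) → ℝ := fun k => ∫ t, F (Fin.snoc k t) ∂haar with hGt
      have hGtcont : Continuous Gt :=
        cont_param haar (F := fun k t => F (Fin.snoc k t)) (hF.comp (cont_snoc n))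
      have hq : Continuous fun q : G × (Fin n → G) =>
          F (fun j => ((Fin.snoc q.2 q.1 : Fin (n+1) → G) j)⁻¹ * B j (Fin.snoc q.2 q.1)) :=
        hVcont.comp ((cont_snoc n).comp (continuous_snd.prodMk continuous_fst))
      have hq' : Continuous fun q : G × (Fin n → G) => F (Fin.snoc q.2 q.1) :=
        hF.comp ((cont_snoc n).comp (continuous_snd.prodMk continuous_fst))
      have step1 : ∫ h, F (fun j => (h j)⁻¹ * B j h) ∂Pn1
          = ∫ q : G × (Fin n → G),
              F (fun j => ((Fin.snoc q.2 q.1 : Fin (n+1) → G) j)⁻¹ * B j (Fin.snoc q.2 q.1))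
              ∂(haar.prod Pn) := by
        rw [← (MeasurePreserving.symm e mp).integral_comp e.symm.measurableEmbedding
          (fun h => F (fun j => (h j)⁻¹ * B j h))]
        congr 1
        funext q
        rw [hsymm q]
      have step1' : ∫ h, F h ∂Pn1
          = ∫ q : G × (Fin n → G), F (Fin.snoc q.2 q.1) ∂(haar.prod Pn) := by
        rw [← (MeasurePreserving.symm e mp).integral_comp e.symm.measurableEmbedding F]
        congr 1
        funext q
        rw [hsymm q]
      have step2 : ∫ q : G × (Fin n → G),
            F (fun j => ((Fin.snoc q.2 q.1 : Fin (n+1) → G) j)⁻¹ * B j (Fin.snoc q.2 q.1))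
            ∂(haar.prod Pn)
          = ∫ k, ∫ t, F (fun j => ((Fin.snoc k t : Fin (n+1) → G) j)⁻¹ * B j (Fin.snoc k t))
              ∂haar ∂Pn := by
        rw [integral_prod _ (cont_integrable _ hq)]
        exact integral_integral_swap (cont_integrable _ (by exact hq))
      have step2' : ∫ q : G × (Fin n → G), F (Fin.snoc q.2 q.1) ∂(haar.prod Pn)
          = ∫ k, Gt k ∂Pn := by
        rw [integral_prod _ (cont_integrable _ hq')]
        exact integral_integral_swap (cont_integrable _ (by exact hq'))
      have step3 : ∀ k, (∫ t, F (fun j => ((Fin.snoc k t : Fin (n+1) → G) j)⁻¹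
            * B j (Fin.snoc k t)) ∂haar)
          = Gt (fun j' => (k j')⁻¹ * B (Fin.castSucc j') (Fin.snoc k 1)) := by
        intro k
        simp only [hVsnoc]
        set W : Fin n → G := fun j' => (k j')⁻¹ * B (Fin.castSucc j') (Fin.snoc k 1) with hW
        exact haar_integral_inv_mul haar (B (Fin.last n) (Fin.snoc k 1))
          (φ := fun t => F (Fin.snoc W t))
          (hF.comp ((cont_snoc n).comp
            ((continuous_const : Continuous fun _ : G => W).prodMk continuous_id)))
      have step4 : ∫ k, Gt (fun j' => (k j')⁻¹ * B (Fin.castSucc j') (Fin.snoc k 1)) ∂Pn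
          = ∫ k, Gt k ∂Pn := by
        apply ih
        · intro j'; exact (hBc _).comp hsnoc1
        · intro j' k k' hagree
          apply hBdep
          intro i hij
          have hlast : i < Fin.last n := lt_of_lt_of_le hij (Fin.le_last _)
          have hlt : (i : ℕ) < n := by simpa [Fin.lt_def] using hlast
          have hi : i = Fin.castSucc ⟨(i : ℕ), hlt⟩ := by ext; simp
          rw [hi, Fin.snoc_castSucc, Fin.snoc_castSucc]
          apply hagree
          have h3 : ((⟨(i : ℕ), hlt⟩ : Fin n) : ℕ) < (j' : ℕ) := by
            simpa [Fin.lt_def] using hij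
          exact h3
        · exact hGtcont
      rw [step1, step2]
      calc ∫ k, (∫ t, F (fun j => ((Fin.snoc k t : Fin (n+1) → G) j)⁻¹
              * B j (Fin.snoc k t)) ∂haar) ∂Pn
          = ∫ k, Gt (fun j' => (k j')⁻¹ * B (Fin.castSucc j') (Fin.snoc k 1)) ∂Pn := by
            congr 1; funext k; exact step3 k
        _ = ∫ k, Gt k ∂Pn := step4
        _ = ∫ h, F h ∂Pn1 := by rw [step1', step2']

private lemma meas_𝒪 (𝒪 : Set G) (x₀ : G) (h𝒪 : 𝒪 = {y | IsConj x₀ y}) :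
    MeasurableSet 𝒪 := by
  have h1 : 𝒪 = Set.range (fun c : G => c * x₀ * c⁻¹) := by
    rw [h𝒪]; ext y
    simp only [Set.mem_setOf_eq, Set.mem_range, isConj_iff]
  rw [h1]
  exact (isCompact_range ((continuous_id.mul continuous_const).mul
    continuous_inv)).isClosed.measurableSet

private lemma conj_avg (𝒪 : Set G) (x₀ : G) (h𝒪 : 𝒪 = {y | IsConj x₀ y})
    (ρ : Measure G) [IsProbabilityMeasure ρ]
    (hρinv : ∀ g : G, Measure.map (fun x => g * x * g⁻¹) ρ = ρ)
    (hρsupp : ρ 𝒪 = 1)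
    (φ : G → ℝ) (hφ : Continuous φ) :
    ∫ y, φ y ∂ρ = ∫ g, φ (g * x₀ * g⁻¹) ∂haar := by
  have hm𝒪 : MeasurableSet 𝒪 := meas_𝒪 𝒪 x₀ h𝒪
  have hae : ∀ᵐ y ∂ρ, y ∈ 𝒪 := by
    rw [Filter.eventually_iff]
    have hcompl : ρ 𝒪ᶜ = 0 := by
      rw [measure_compl hm𝒪 (measure_ne_top _ _), hρsupp, measure_univ, tsub_self]
    rw [mem_ae_iff]
    simpa using hcompl
  have hΨconst : ∀ y ∈ 𝒪, (∫ g, φ (g * y * g⁻¹) ∂haar) = ∫ g, φ (g * x₀ * g⁻¹) ∂haar := by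
    intro y hy
    rw [h𝒪] at hy
    obtain ⟨c, hc⟩ := isConj_iff.mp hy
    have h1 : ∀ g : G, g * y * g⁻¹ = (g * c) * x₀ * (g * c)⁻¹ := by
      intro g; rw [← hc]; group
    simp only [h1]
    exact haar_integral_mul_right haar c (φ := fun g => φ (g * x₀ * g⁻¹))
      (hφ.comp ((continuous_id.mul continuous_const).mul continuous_id.inv))
  have h2 : ∀ g : G, ∫ y, φ y ∂ρ = ∫ y, φ (g * y * g⁻¹) ∂ρ := by
    intro g
    conv_lhs => rw [← hρinv g]
    rw [integral_map ((measurable_const_mul g).mul_const g⁻¹).aemeasurable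
      hφ.aestronglyMeasurable]
  have huncur : Continuous fun q : G × G => φ (q.1 * q.2 * q.1⁻¹) :=
    hφ.comp ((continuous_fst.mul continuous_snd).mul continuous_fst.inv)
  calc ∫ y, φ y ∂ρ = ∫ _g, (∫ y, φ y ∂ρ) ∂haar := by
        rw [integral_const, probReal_univ, one_smul]
    _ = ∫ g, ∫ y, φ (g * y * g⁻¹) ∂ρ ∂haar := by
        congr 1; funext g; exact h2 g
    _ = ∫ y, ∫ g, φ (g * y * g⁻¹) ∂haar ∂ρ :=
        integral_integral_swap (cont_integrable _ huncur)
    _ = ∫ _y, ∫ g, φ (g * x₀ * g⁻¹) ∂haar ∂ρ := by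
        refine integral_congr_ae ?_
        filter_upwards [hae] with y hy using hΨconst y hy
    _ = ∫ g, φ (g * x₀ * g⁻¹) ∂haar := by
        rw [integral_const, probReal_univ, one_smul]

private lemma conj_list_prod (g : G) (l : List G) :
    (l.map fun a => g * a * g⁻¹).prod = g * l.prod * g⁻¹ := by
  induction l with
  | nil => simp
  | cons a l ih => simp only [List.map_cons, List.prod_cons, ih]; group

private lemma prod_take_succ_ofFn {k : ℕ} (u : Fin k → G) (j : ℕ) (hj : j < k) :
    ((List.ofFn u).take (j+1)).prod = ((List.ofFn u).take j).prod * u ⟨j, hj⟩ := by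
  rw [List.prod_take_succ _ _ (by simpa using hj)]
  congr 1
  simp [List.getElem_ofFn]

private lemma take_ofFn_all {k : ℕ} (u : Fin k → G) :
    (List.ofFn u).take k = List.ofFn u :=
  List.take_of_length_le (by simp)

private lemma cont_take_prod (k j : ℕ) :
    Continuous fun h : Fin k → G => ((List.ofFn h).take j).prod := by
  induction j with
  | zero => simp only [List.take_zero, List.prod_nil]; exact continuous_const
  | succ j ih =>
      by_cases hj : j < k
      · have h1 : ∀ h : Fin k → G, ((List.ofFn h).take (j+1)).prod
            = ((List.ofFn h).take j).prod * h ⟨j, hj⟩ :=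
          fun h => prod_take_succ_ofFn h j hj
        simp only [h1]
        exact ih.mul (continuous_apply _)
      · have h1 : ∀ h : Fin k → G, (List.ofFn h).take (j+1) = (List.ofFn h).take j := by
          intro h
          rw [List.take_of_length_le (by simp; omega), List.take_of_length_le (by simp; omega)]
        simp only [h1]
        exact ih

end AuxConjUnif

/-- Let `G` be a compact group with normalized Haar measure, `𝒪` a conjugacy class and
`μ = δ_{𝒪(n)}` the unique probability measure on
`𝒪(n) = {(x₁,…,xₙ) : x₁⋯xₙ ∈ 𝒪} ⊆ Gⁿ` invariant under
`(g₁,…,gₙ)·(x₁,…,xₙ) = (g₁x₁g₂⁻¹,…,gₙxₙg₁⁻¹)` (here `n = m + 1 ≥ 1`).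
Then for every continuous `f : Gⁿ → ℝ`,
`∫ f dδ_{𝒪(n)} = ∫ f(x₁,…,x_{n-1},(x₁⋯x_{n-1})⁻¹ y) dx₁⋯dx_{n-1} δ_𝒪(dy)`,
where `δ_𝒪` is the invariant probability measure on `𝒪`. -/
theorem integral_constrained_uniform_eq
    {G : Type*} [Group G] [TopologicalSpace G] [IsTopologicalGroup G] [CompactSpace G]
    [T2Space G] [SecondCountableTopology G] [MeasurableSpace G] [BorelSpace G]
    (haar : Measure G) [IsProbabilityMeasure haar] [haar.IsMulLeftInvariant]
    (m : ℕ) (𝒪 : Set G) (x₀ : G) (h𝒪 : 𝒪 = {y | IsConj x₀ y})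
    (μ : Measure (Fin (m + 1) → G)) [IsProbabilityMeasure μ]
    (hμsupp : μ {x | (List.ofFn x).prod ∈ 𝒪} = 1)
    (hμinv : ∀ g : Fin (m + 1) → G,
      Measure.map (fun x : Fin (m + 1) → G => fun i => g i * x i * (g (i + 1))⁻¹) μ = μ)
    (ν : Measure G) [IsProbabilityMeasure ν]
    (hνsupp : ν 𝒪 = 1)
    (hνinv : ∀ g : G, Measure.map (fun x => g * x * g⁻¹) ν = ν)
    (f : (Fin (m + 1) → G) → ℝ) (hf : Continuous f) :
    ∫ x, f x ∂μ =
      ∫ y, ∫ x : Fin m → G, f (Fin.snoc x ((List.ofFn x).prod⁻¹ * y))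
        ∂(Measure.pi fun _ => haar) ∂ν := by
  classical
  have hm𝒪 : MeasurableSet 𝒪 := meas_𝒪 𝒪 x₀ h𝒪
  have hpcont : Continuous fun x : Fin (m+1) → G => (List.ofFn x).prod := cont_listProd _
  set Pm : Measure (Fin m → G) := Measure.pi fun _ => haar with hPm
  haveI hPmprob : IsProbabilityMeasure Pm :=
    inferInstanceAs (IsProbabilityMeasure (Measure.pi fun _ : Fin m => haar))
  set φt : G → ℝ :=
    fun y => ∫ h : Fin m → G, f (Fin.snoc h ((List.ofFn h).prod⁻¹ * y)) ∂Pm with hφt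
  have hφtcont : Continuous φt := by
    apply cont_param Pm (F := fun y h => f (Fin.snoc h ((List.ofFn h).prod⁻¹ * y)))
    exact hf.comp ((cont_snoc m).comp (continuous_snd.prodMk
      ((((cont_listProd m).comp continuous_snd).inv).mul continuous_fst)))
  -- the pushforward of μ under the product map
  set lam : Measure G := Measure.map (fun x : Fin (m+1) → G => (List.ofFn x).prod) μ with hlam
  haveI hlamprob : IsProbabilityMeasure lam :=
    Measure.isProbabilityMeasure_map hpcont.measurable.aemeasurable
  have hlaminv : ∀ g : G, Measure.map (fun y => g * y * g⁻¹) lam = lam := by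
    intro g
    have key : ∀ x : Fin (m+1) → G,
        (List.ofFn fun i => g * x i * g⁻¹).prod = g * (List.ofFn x).prod * g⁻¹ := by
      intro x
      have h1 : (List.ofFn fun i => g * x i * g⁻¹)
          = (List.ofFn x).map (fun a => g * a * g⁻¹) := by
        rw [List.map_ofFn]; rfl
      rw [h1, conj_list_prod]
    have hA : Measure.map (fun x : Fin (m+1) → G => fun i => g * x i * g⁻¹) μ = μ := by
      simpa using hμinv (fun _ => g)
    have hAmeas : Measurable (fun x : Fin (m+1) → G => fun i => g * x i * g⁻¹) :=
      by fun_prop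
    rw [hlam, Measure.map_map ((measurable_const_mul g).mul_const g⁻¹) hpcont.measurable]
    have hcomp : ((fun y => g * y * g⁻¹) ∘ fun x : Fin (m+1) → G => (List.ofFn x).prod)
        = (fun x : Fin (m+1) → G => (List.ofFn x).prod)
          ∘ (fun x : Fin (m+1) → G => fun i => g * x i * g⁻¹) := by
      funext x
      simp only [Function.comp_apply]
      exact (key x).symm
    rw [hcomp, ← Measure.map_map hpcont.measurable hAmeas, hA]
  have hlamsupp : lam 𝒪 = 1 := by
    rw [hlam, Measure.map_apply hpcont.measurable hm𝒪]
    exact hμsupp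
  -- invariance of μ under the action, integral form
  have hact : ∀ g : Fin (m+1) → G,
      ∫ x, f x ∂μ = ∫ x, f (fun i => g i * x i * (g (i + 1))⁻¹) ∂μ := by
    intro g
    conv_lhs => rw [← hμinv g]
    rw [integral_map (measurable_pi_lambda _ fun i =>
      ((measurable_pi_apply i).const_mul (g i)).mul_const _).aemeasurable
      hf.aestronglyMeasurable]
  -- joint continuity of the averaged action
  have hcontact : Continuous fun q : (Fin m → G) × (Fin (m+1) → G) =>
      f (fun i => (Fin.cons 1 q.1 : Fin (m+1) → G) i * q.2 i
        * ((Fin.cons 1 q.1 : Fin (m+1) → G) (i+1))⁻¹) :=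
    by
    refine hf.comp (continuous_pi fun i => Continuous.mul (Continuous.mul ?_ ?_) (Continuous.inv ?_))
    · exact (cont_cons_eval m i).comp continuous_fst
    · exact (continuous_apply i).comp continuous_snd
    · exact (cont_cons_eval m (i+1)).comp continuous_fst
  -- inner integral computation via the triangular change of variables
  have hJ : ∀ x : Fin (m+1) → G,
      (∫ k, f (fun i => (Fin.cons 1 k : Fin (m+1) → G) i * x i
        * ((Fin.cons 1 k : Fin (m+1) → G) (i+1))⁻¹) ∂Pm)
      = φt ((List.ofFn x).prod) := by
    intro x
    set B : Fin m → (Fin m → G) → G := fun j h =>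
      (((List.ofFn h).take (j : ℕ)).prod)⁻¹ * ((List.ofFn x).take ((j : ℕ)+1)).prod with hB
    have hBc : ∀ j, Continuous (B j) := fun j =>
      ((cont_take_prod m (j : ℕ)).inv).mul continuous_const
    have hBdep : ∀ (j : Fin m) (h h' : Fin m → G),
        (∀ i : Fin m, i < j → h i = h' i) → B j h = B j h' := by
      intro j h h' hag
      simp only [hB]
      congr 3
      exact take_ofFn_eq h h' (j : ℕ) (fun i hi => hag i (Fin.lt_def.mpr hi))
    have hFcont : Continuous fun k : Fin m → G =>
        f (fun i => (Fin.cons 1 k : Fin (m+1) → G) i * x i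
          * ((Fin.cons 1 k : Fin (m+1) → G) (i+1))⁻¹) :=
      by
      refine hf.comp (continuous_pi fun i => Continuous.mul (Continuous.mul ?_ ?_) (Continuous.inv ?_))
      · exact cont_cons_eval m i
      · exact continuous_const
      · exact cont_cons_eval m (i+1)
    have tri_app := tri haar m B hBc hBdep _ hFcont
    -- the key pointwise identity
    have hkey : ∀ h : Fin m → G,
        (fun i => (Fin.cons 1 (fun j => (h j)⁻¹ * B j h) : Fin (m+1) → G) i * x i
          * ((Fin.cons 1 (fun j => (h j)⁻¹ * B j h) : Fin (m+1) → G) (i+1))⁻¹)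
        = Fin.snoc h ((List.ofFn h).prod⁻¹ * (List.ofFn x).prod) := by
      intro h
      set w : Fin (m+1) → G := fun j =>
        (((List.ofFn h).take (j : ℕ)).prod)⁻¹ * ((List.ofFn x).take (j : ℕ)).prod with hw
      have hconsw : (Fin.cons 1 (fun j => (h j)⁻¹ * B j h) : Fin (m+1) → G) = w := by
        funext j
        induction j using Fin.cases with
        | zero => simp [hw]
        | succ j' =>
            simp only [Fin.cons_succ, hB, hw, Fin.val_succ]
            rw [prod_take_succ_ofFn h (j' : ℕ) j'.isLt, mul_inv_rev]
            have hj' : (⟨(j' : ℕ), j'.isLt⟩ : Fin m) = j' := by ext; rfl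
            rw [hj', mul_assoc]
      rw [hconsw]
      funext i
      induction i using Fin.lastCases with
      | last =>
          rw [Fin.last_add_one, Fin.snoc_last]
          have hw0 : w 0 = 1 := by simp [hw]
          have hwlast : w (Fin.last m)
              = ((List.ofFn h).prod)⁻¹ * ((List.ofFn x).take m).prod := by
            simp only [hw, Fin.val_last, take_ofFn_all]
          rw [hw0, inv_one, mul_one, hwlast, mul_assoc]
          congr 1
          have h1 : ((List.ofFn x).take (m+1)).prod
              = ((List.ofFn x).take m).prod * x ⟨m, Nat.lt_succ_self m⟩ :=
            prod_take_succ_ofFn x m (Nat.lt_succ_self m)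
          have h2 : (List.ofFn x).take (m+1) = List.ofFn x := take_ofFn_all x
          rw [h2] at h1
          rw [h1]
          congr 1
      | cast j =>
          rw [Fin.coeSucc_eq_succ, Fin.snoc_castSucc]
          have hcs : ((Fin.castSucc j : Fin (m+1)) : ℕ) = (j : ℕ) := rfl
          have hs : ((Fin.succ j : Fin (m+1)) : ℕ) = (j : ℕ) + 1 := rfl
          simp only [hw, hcs, hs]
          have hxlt : (j : ℕ) < m + 1 := lt_trans j.isLt (Nat.lt_succ_self m)
          rw [prod_take_succ_ofFn h (j : ℕ) j.isLt,
            prod_take_succ_ofFn x (j : ℕ) hxlt]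
          have hjx : (⟨(j : ℕ), hxlt⟩ : Fin (m+1)) = Fin.castSucc j := by ext; rfl
          have hjh : (⟨(j : ℕ), j.isLt⟩ : Fin m) = j := by ext; rfl
          rw [hjx, hjh]
          group
    calc (∫ k, f (fun i => (Fin.cons 1 k : Fin (m+1) → G) i * x i
            * ((Fin.cons 1 k : Fin (m+1) → G) (i+1))⁻¹) ∂Pm)
        = ∫ h, f (fun i =>
            (Fin.cons 1 (fun j => (h j)⁻¹ * B j h) : Fin (m+1) → G) i * x i
            * ((Fin.cons 1 (fun j => (h j)⁻¹ * B j h) : Fin (m+1) → G) (i+1))⁻¹) ∂Pm :=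
          tri_app.symm
      _ = ∫ h, f (Fin.snoc h ((List.ofFn h).prod⁻¹ * (List.ofFn x).prod)) ∂Pm := by
          congr 1; funext h; rw [hkey h]
      _ = φt ((List.ofFn x).prod) := rfl
  -- put everything together
  have hLHS : ∫ x, f x ∂μ = ∫ x, φt ((List.ofFn x).prod) ∂μ := by
    calc ∫ x, f x ∂μ = ∫ _k, (∫ x, f x ∂μ) ∂Pm := by
          rw [integral_const, probReal_univ, one_smul]
      _ = ∫ k, ∫ x, f (fun i => (Fin.cons 1 k : Fin (m+1) → G) i * x i
            * ((Fin.cons 1 k : Fin (m+1) → G) (i+1))⁻¹) ∂μ ∂Pm := by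
          congr 1; funext k; exact hact (Fin.cons 1 k)
      _ = ∫ x, ∫ k, f (fun i => (Fin.cons 1 k : Fin (m+1) → G) i * x i
            * ((Fin.cons 1 k : Fin (m+1) → G) (i+1))⁻¹) ∂Pm ∂μ :=
          integral_integral_swap (cont_integrable _ hcontact)
      _ = ∫ x, φt ((List.ofFn x).prod) ∂μ := by
          congr 1; funext x; exact hJ x
  have hμside : ∫ x, φt ((List.ofFn x).prod) ∂μ = ∫ g, φt (g * x₀ * g⁻¹) ∂haar := by
    rw [show (∫ x, φt ((List.ofFn x).prod) ∂μ) = ∫ y, φt y ∂lam from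
      (integral_map hpcont.measurable.aemeasurable hφtcont.aestronglyMeasurable).symm]
    exact conj_avg haar 𝒪 x₀ h𝒪 lam hlaminv hlamsupp φt hφtcont
  have hνside : (∫ y, φt y ∂ν) = ∫ g, φt (g * x₀ * g⁻¹) ∂haar :=
    conj_avg haar 𝒪 x₀ h𝒪 ν hνinv hνsupp φt hφtcont
  rw [hLHS, hμside, ← hνside]
end

section
/- With the notation above, integrating the constrained measures over the constraint recovers Haar measure: for continuous f : Gⁿ → ℝ, ∫_G [∫ f dδ_{𝒪_y(n)}] dy = ∫_{Gⁿ} f(x₁,…,x_n) dx₁⋯dx_n, where 𝒪_y is the conjugacy class of y. -/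
open MeasureTheory

section Aux

variable {G : Type*} [Group G] [TopologicalSpace G] [IsTopologicalGroup G] [CompactSpace G]
    [T2Space G] [SecondCountableTopology G] [MeasurableSpace G] [BorelSpace G]

lemma aux_isHaar (μ : Measure G) [IsProbabilityMeasure μ] [μ.IsMulLeftInvariant] :
    μ.IsHaarMeasure :=
  Measure.isHaarMeasure_of_isCompact_nonempty_interior μ Set.univ isCompact_univ
    (by simp) (by simp) (by simp)

lemma aux_unique (μ μ' : Measure G) [IsProbabilityMeasure μ] [IsProbabilityMeasure μ']
    [μ.IsMulLeftInvariant] [μ'.IsMulLeftInvariant] : μ = μ' := by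
  haveI := aux_isHaar μ
  haveI := aux_isHaar μ'
  exact Measure.isHaarMeasure_eq_of_isProbabilityMeasure μ μ'

lemma aux_rightInvariant (μ : Measure G) [IsProbabilityMeasure μ] [μ.IsMulLeftInvariant] :
    μ.IsMulRightInvariant := by
  constructor
  intro g
  haveI : IsProbabilityMeasure (Measure.map (· * g) μ) :=
    Measure.isProbabilityMeasure_map (measurable_mul_const g).aemeasurable
  haveI : (Measure.map (· * g) μ).IsMulLeftInvariant := by
    constructor
    intro h
    rw [Measure.map_map (measurable_const_mul h) (measurable_mul_const g),
      show ((h * ·) ∘ (· * g)) = ((· * g) ∘ (h * ·)) from funext fun x => (mul_assoc h x g).symm,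
      ← Measure.map_map (measurable_mul_const g) (measurable_const_mul h),
      map_mul_left_eq_self]
  exact aux_unique _ μ

lemma aux_cont_listProd {n : ℕ} : Continuous fun x : Fin n → G => (List.ofFn x).prod := by
  induction n with
  | zero => simpa using continuous_const
  | succ k ih =>
      simp only [List.ofFn_succ, List.prod_cons]
      exact (continuous_apply 0).mul
        (ih.comp (continuous_pi fun i => continuous_apply i.succ))

end Aux

/-- Integrating the constrained measures `δ_{𝒪_y(n)}` over the constraint `y` (with
respect to normalized Haar measure) recovers the Haar measure of `Gⁿ`: for continuous
`f : Gⁿ → ℝ`, `∫_G (∫ f dδ_{𝒪_y(n)}) dy = ∫_{Gⁿ} f dx₁⋯dxₙ`.  Here `n = m + 1 ≥ 1`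
and, for each `y`, `ν y = δ_{𝒪_y(n)}` is the unique probability measure on
`{(x₁,…,xₙ) : x₁⋯xₙ ∈ 𝒪_y}` invariant under
`(g₁,…,gₙ)·(x₁,…,xₙ) = (g₁x₁g₂⁻¹,…,gₙxₙg₁⁻¹)`. -/
theorem integral_constrained_uniform_over_constraint
    {G : Type*} [Group G] [TopologicalSpace G] [IsTopologicalGroup G] [CompactSpace G]
    [T2Space G] [SecondCountableTopology G] [MeasurableSpace G] [BorelSpace G]
    (haar : Measure G) [IsProbabilityMeasure haar] [haar.IsMulLeftInvariant]
    (m : ℕ) (ν : G → Measure (Fin (m + 1) → G))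
    (hνprob : ∀ y, IsProbabilityMeasure (ν y))
    (hνsupp : ∀ y : G, ν y {x | IsConj y ((List.ofFn x).prod)} = 1)
    (hνinv : ∀ (y : G) (g : Fin (m + 1) → G),
      Measure.map (fun x : Fin (m + 1) → G => fun i => g i * x i * (g (i + 1))⁻¹) (ν y) = ν y)
    (f : (Fin (m + 1) → G) → ℝ) (hf : Continuous f) :
    ∫ y, (∫ x, f x ∂(ν y)) ∂haar = ∫ x, f x ∂(Measure.pi fun _ => haar) := by
  haveI : haar.IsMulRightInvariant := aux_rightInvariant haar
  set μ : Measure (Fin (m + 1) → G) := Measure.pi fun _ => haar with hμdef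
  -- joint continuity of the action
  have cont_act : Continuous (fun p : ((Fin (m + 1) → G) × (Fin (m + 1) → G)) =>
      (fun i => p.1 i * p.2 i * (p.1 (i + 1))⁻¹ : Fin (m + 1) → G)) := by
    refine continuous_pi fun i => ?_
    exact (((continuous_apply i).comp continuous_fst).mul
        ((continuous_apply i).comp continuous_snd)).mul
      (((continuous_apply (i + 1)).comp continuous_fst).inv)
  have cont_in_x : ∀ g : Fin (m + 1) → G,
      Continuous fun x : Fin (m + 1) → G => (fun i => g i * x i * (g (i + 1))⁻¹ :
        Fin (m + 1) → G) :=
    fun g => cont_act.comp (continuous_const.prodMk continuous_id)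
  have cont_in_g : ∀ x : Fin (m + 1) → G,
      Continuous fun g : Fin (m + 1) → G => (fun i => g i * x i * (g (i + 1))⁻¹ :
        Fin (m + 1) → G) :=
    fun x => cont_act.comp (continuous_id.prodMk continuous_const)
  -- measure preservation of the action w.r.t. Haar on `Gⁿ`
  have mp_act : ∀ g : Fin (m + 1) → G,
      MeasurePreserving (fun x : Fin (m + 1) → G =>
        (fun i => g i * x i * (g (i + 1))⁻¹ : Fin (m + 1) → G)) μ μ :=
    fun g => measurePreserving_pi _ _ fun i =>
      (measurePreserving_mul_right haar (g (i + 1))⁻¹).comp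
        (measurePreserving_mul_left haar (g i))
  have mp_trans : ∀ h : Fin (m + 1) → G,
      MeasurePreserving (fun g : Fin (m + 1) → G =>
        (fun i => g i * h i : Fin (m + 1) → G)) μ μ :=
    fun h => measurePreserving_pi _ _ fun i => measurePreserving_mul_right haar (h i)
  -- bound for f
  obtain ⟨C, hC⟩ : ∃ C, ∀ z, ‖f z‖ ≤ C := by
    obtain ⟨z0, -, hz⟩ := isCompact_univ.exists_isMaxOn Set.univ_nonempty
      hf.norm.continuousOn
    exact ⟨‖f z0‖, fun z => hz (Set.mem_univ z)⟩
  -- the averaged function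
  set F : (Fin (m + 1) → G) → ℝ :=
    fun x => ∫ g, f (fun i => g i * x i * (g (i + 1))⁻¹) ∂μ with hFdef
  have cont_F : Continuous F := by
    refine continuous_of_dominated
      (fun x => ((hf.comp (cont_in_g x)).aestronglyMeasurable)) (fun x => ?_)
      (integrable_const C) ?_
    · exact Filter.Eventually.of_forall fun g => hC _
    · exact Filter.Eventually.of_forall fun g => hf.comp (cont_in_x g)
  -- F is constant on sets with conjugate products
  have F_conj : ∀ x x' : Fin (m + 1) → G,
      IsConj ((List.ofFn x).prod) ((List.ofFn x').prod) → F x = F x' := by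
    intro x x' hconj
    obtain ⟨c, hc⟩ := isConj_iff.1 hconj
    set P : ℕ → G := fun k => ((List.ofFn x).take k).prod with hP
    set Q : ℕ → G := fun k => ((List.ofFn x').take k).prod with hQ
    set H : Fin (m + 1) → G := fun i => (Q i.val)⁻¹ * c * P i.val with hH
    have key : ∀ i : Fin (m + 1), H i * x i * (H (i + 1))⁻¹ = x' i := by
      intro i
      by_cases hi : i = Fin.last m
      · subst hi
        have h1 : (Fin.last m) + 1 = 0 := Fin.last_add_one m
        have hP0 : P 0 = 1 := by simp [hP]
        have hQ0 : Q 0 = 1 := by simp [hQ]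
        have hPm : P m * x (Fin.last m) = (List.ofFn x).prod := by
          have h2 := List.prod_take_succ (List.ofFn x) m (by simp)
          rw [List.take_of_length_le (by simp)] at h2
          simp only [hP]
          rw [h2, List.getElem_ofFn]
          rfl
        have hQm : Q m * x' (Fin.last m) = (List.ofFn x').prod := by
          have h2 := List.prod_take_succ (List.ofFn x') m (by simp)
          rw [List.take_of_length_le (by simp)] at h2
          simp only [hQ]
          rw [h2, List.getElem_ofFn]
          rfl
        rw [h1]
        simp only [hH, Fin.val_last, Fin.val_zero, hP0, hQ0, inv_one, mul_one, one_mul]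
        calc (Q m)⁻¹ * c * P m * x (Fin.last m) * c⁻¹
            = (Q m)⁻¹ * (c * (P m * x (Fin.last m)) * c⁻¹) := by group
          _ = (Q m)⁻¹ * (Q m * x' (Fin.last m)) := by rw [hPm, hc, ← hQm]
          _ = x' (Fin.last m) := by group
      · have hlt : i < Fin.last m := Fin.lt_last_iff_ne_last.2 hi
        have h1 : ((i + 1 : Fin (m + 1))).val = i.val + 1 := Fin.val_add_one_of_lt hlt
        have hPs : P (i.val + 1) = P i.val * x i := by
          have h2 := List.prod_take_succ (List.ofFn x) i.val (by simp [i.isLt])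
          simp only [hP]
          rw [h2, List.getElem_ofFn]
        have hQs : Q (i.val + 1) = Q i.val * x' i := by
          have h2 := List.prod_take_succ (List.ofFn x') i.val (by simp [i.isLt])
          simp only [hQ]
          rw [h2, List.getElem_ofFn]
        simp only [hH, h1, hPs, hQs]
        group
    have hsubst : ∀ g : Fin (m + 1) → G,
        (fun i => (g i * H i) * x i * ((g (i + 1) * H (i + 1)))⁻¹ : Fin (m + 1) → G)
          = fun i => g i * x' i * (g (i + 1))⁻¹ := by
      intro g
      funext i
      rw [← key i]
      group
    calc F x = ∫ g, f (fun i => g i * x i * (g (i + 1))⁻¹)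
          ∂(Measure.map (fun g : Fin (m + 1) → G => (fun i => g i * H i : Fin (m + 1) → G)) μ) := by
          rw [(mp_trans H).map_eq]
      _ = ∫ g, f (fun i => (g i * H i) * x i * ((g (i + 1) * H (i + 1)))⁻¹) ∂μ := by
          rw [integral_map (mp_trans H).measurable.aemeasurable]
          rw [(mp_trans H).map_eq]
          exact (hf.comp (cont_in_g x)).aestronglyMeasurable
      _ = F x' := by
          refine integral_congr_ae (Filter.Eventually.of_forall fun g => ?_)
          show f (fun i => (g i * H i) * x i * ((g (i + 1) * H (i + 1)))⁻¹)
            = f (fun i => g i * x' i * (g (i + 1))⁻¹)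
          rw [hsubst g]
    done
  -- pushforward of Haar on Gⁿ under the product map is Haar on G
  have prodmap_cont : Continuous fun x : Fin (m + 1) → G => (List.ofFn x).prod :=
    aux_cont_listProd
  have prodmap_meas : Measurable fun x : Fin (m + 1) → G => (List.ofFn x).prod :=
    prodmap_cont.measurable
  have hmap_prod : Measure.map (fun x : Fin (m + 1) → G => (List.ofFn x).prod) μ = haar := by
    haveI : IsProbabilityMeasure
        (Measure.map (fun x : Fin (m + 1) → G => (List.ofFn x).prod) μ) :=
      Measure.isProbabilityMeasure_map prodmap_meas.aemeasurable
    haveI : (Measure.map (fun x : Fin (m + 1) → G => (List.ofFn x).prod) μ).IsMulLeftInvariant := by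
      constructor
      intro g
      have mp_L : MeasurePreserving
          (fun x : Fin (m + 1) → G => (fun i => if i = 0 then g * x i else x i :
            Fin (m + 1) → G)) μ μ := by
        refine measurePreserving_pi (fun _ => haar) (fun _ => haar)
          (f := fun i t => if i = 0 then g * t else t) fun i => ?_
        by_cases h : i = 0
        · simpa [h] using measurePreserving_mul_left haar g
        · simp only [h, ↓reduceIte]; exact MeasurePreserving.id haar
      rw [Measure.map_map (measurable_const_mul g) prodmap_meas]
      have e1 : ((g * ·) ∘ fun x : Fin (m + 1) → G => (List.ofFn x).prod)
          = (fun x : Fin (m + 1) → G => (List.ofFn x).prod) ∘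
            (fun x : Fin (m + 1) → G => (fun i => if i = 0 then g * x i else x i :
              Fin (m + 1) → G)) := by
        funext x
        simp only [Function.comp_apply, List.ofFn_succ, List.prod_cons, Fin.succ_ne_zero,
          if_false, if_true, reduceIte, mul_assoc]
      rw [e1, ← Measure.map_map prodmap_meas mp_L.measurable, mp_L.map_eq]
    exact aux_unique _ haar
  -- prod of the canonical representative
  have prodmap_e : ∀ z : G,
      (List.ofFn (fun i : Fin (m + 1) => if i = 0 then z else 1)).prod = z := by
    intro z
    simp [List.ofFn_succ, Fin.succ_ne_zero, List.ofFn_const]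
  have cont_e : Continuous fun z : G => (fun i => if i = 0 then z else 1 : Fin (m + 1) → G) := by
    refine continuous_pi fun i => ?_
    by_cases h : i = 0 <;> simp [h] <;> [exact continuous_id; exact continuous_const]
  -- Step A
  have stepA : ∀ y : G, ∫ x, f x ∂(ν y) = F (fun i => if i = 0 then y else 1) := by
    intro y
    haveI := hνprob y
    have hconjset : MeasurableSet {x : Fin (m + 1) → G | IsConj y ((List.ofFn x).prod)} := by
      have hset : {z : G | IsConj y z} = Set.range (fun c : G => c * y * c⁻¹) := by
        ext z; exact isConj_iff
      have hcl : IsClosed {z : G | IsConj y z} := by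
        rw [hset]
        exact (isCompact_range ((continuous_id.mul continuous_const).mul
          continuous_inv)).isClosed
      exact prodmap_meas hcl.measurableSet
    have hae : ∀ᵐ x ∂(ν y), IsConj y ((List.ofFn x).prod) := by
      rw [ae_iff]
      have : {x : Fin (m + 1) → G | ¬IsConj y ((List.ofFn x).prod)}
          = {x : Fin (m + 1) → G | IsConj y ((List.ofFn x).prod)}ᶜ := rfl
      rw [this, measure_compl hconjset (measure_ne_top _ _), hνsupp y, measure_univ]
      simp
    have hInt1 : Integrable
        (Function.uncurry fun g x : Fin (m + 1) → G =>
          f (fun i => g i * x i * (g (i + 1))⁻¹)) (μ.prod (ν y)) :=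
      (hf.comp cont_act).integrable_of_hasCompactSupport (isClosed_tsupport _).isCompact
    calc ∫ x, f x ∂(ν y) = ∫ _g, (∫ x, f x ∂(ν y)) ∂μ := by
          rw [integral_const, probReal_univ, one_smul]
      _ = ∫ g, ∫ x, f (fun i => g i * x i * (g (i + 1))⁻¹) ∂(ν y) ∂μ := by
          refine integral_congr_ae (Filter.Eventually.of_forall fun g => ?_)
          conv_lhs => rw [← hνinv y g]
          rw [integral_map (cont_in_x g).measurable.aemeasurable]
          rw [hνinv y g]
          exact hf.aestronglyMeasurable
      _ = ∫ x, F x ∂(ν y) := integral_integral_swap hInt1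
      _ = ∫ _x, F (fun i => if i = 0 then y else 1) ∂(ν y) := by
          refine integral_congr_ae ?_
          filter_upwards [hae] with x hx
          exact F_conj _ _ (by rw [prodmap_e y]; exact hx.symm)
      _ = F (fun i => if i = 0 then y else 1) := by
          rw [integral_const, probReal_univ, one_smul]
  -- Step D helper integrability
  have hInt2 : Integrable
      (Function.uncurry fun x g : Fin (m + 1) → G =>
        f (fun i => g i * x i * (g (i + 1))⁻¹)) (μ.prod μ) := by
    have : Continuous fun p : ((Fin (m + 1) → G) × (Fin (m + 1) → G)) =>
        f (fun i => p.2 i * p.1 i * (p.2 (i + 1))⁻¹) :=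
      hf.comp (cont_act.comp (continuous_snd.prodMk continuous_fst))
    exact this.integrable_of_hasCompactSupport (isClosed_tsupport _).isCompact
  -- main chain
  calc ∫ y, (∫ x, f x ∂(ν y)) ∂haar
      = ∫ y, F (fun i => if i = 0 then y else 1) ∂haar := by
        refine integral_congr_ae (Filter.Eventually.of_forall fun y => ?_)
        exact stepA y
    _ = ∫ x, F (fun i => if i = 0 then (List.ofFn x).prod else 1) ∂μ := by
        rw [← hmap_prod, integral_map prodmap_meas.aemeasurable]
        rw [hmap_prod]
        exact (cont_F.comp cont_e).aestronglyMeasurable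
    _ = ∫ x, F x ∂μ := by
        refine integral_congr_ae (Filter.Eventually.of_forall fun x => ?_)
        exact F_conj _ _ (by rw [prodmap_e])
    _ = ∫ g, ∫ x, f (fun i => g i * x i * (g (i + 1))⁻¹) ∂μ ∂μ :=
        integral_integral_swap hInt2
    _ = ∫ _g, ∫ x, f x ∂μ ∂μ := by
        refine integral_congr_ae (Filter.Eventually.of_forall fun g => ?_)
        rw [← (mp_act g).map_eq, integral_map (mp_act g).measurable.aemeasurable]
        rw [(mp_act g).map_eq]
        exact hf.aestronglyMeasurable
    _ = ∫ x, f x ∂μ := by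
        rw [integral_const, probReal_univ, one_smul]
end

section
/- Let G be a compact group, η the commutator measure (pushforward of Haar×Haar under (a,b) ↦ aba⁻¹b⁻¹) and κ the square measure (pushforward of Haar under a ↦ a²). Then κ * η = κ * κ * κ. -/
open MeasureTheory

section Aux

variable {G : Type*} [Group G] [TopologicalSpace G] [IsTopologicalGroup G] [CompactSpace G]
    [T2Space G] [SecondCountableTopology G] [MeasurableSpace G] [BorelSpace G]
    (μ : Measure G) [IsProbabilityMeasure μ] [μ.IsMulLeftInvariant]

/-- Skew left translation of the second factor is measure preserving. -/
lemma mp_snd_pair {X : Type*} [MeasurableSpace X] (ν : Measure X) [SFinite ν]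
    (w : X → G) (hw : Measurable w) :
    MeasurePreserving (fun q : X × G => (q.1, w q.1 * q.2)) (ν.prod μ) (ν.prod μ) :=
  (MeasurePreserving.id ν).skew_product (g := fun x y => w x * y)
    ((hw.comp measurable_fst).mul measurable_snd)
    (Filter.Eventually.of_forall fun x => map_mul_left_eq_self μ (w x))

/-- Skew left translation of the first factor is measure preserving. -/
lemma mp_fst_pair {X : Type*} [MeasurableSpace X] (ν : Measure X) [SFinite ν]
    (w : X → G) (hw : Measurable w) :
    MeasurePreserving (fun q : G × X => (w q.2 * q.1, q.2)) (μ.prod ν) (μ.prod ν) := by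
  have h := (Measure.measurePreserving_swap (μ := ν) (ν := μ)).comp
    ((mp_snd_pair μ ν w hw).comp (Measure.measurePreserving_swap (μ := μ) (ν := ν)))
  exact h

/-- Move of type A : multiply the first coordinate of a triple on the left by a word in
the other coordinates. -/
lemma moveA (w : G × G → G) (hw : Measurable w) :
    MeasurePreserving (fun p : G × G × G => (w p.2 * p.1, p.2))
      (μ.prod (μ.prod μ)) (μ.prod (μ.prod μ)) :=
  mp_fst_pair μ (μ.prod μ) w hw

/-- Move of type B : multiply the second coordinate of a triple on the left by a word in
the other coordinates. -/
lemma moveB (w : G → G → G) (hw : Measurable fun p : G × G => w p.1 p.2) :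
    MeasurePreserving (fun p : G × G × G => (p.1, w p.1 p.2.2 * p.2.1, p.2.2))
      (μ.prod (μ.prod μ)) (μ.prod (μ.prod μ)) := by
  refine (MeasurePreserving.id μ).skew_product
    (g := fun (a : G) (r : G × G) => (w a r.2 * r.1, r.2)) ?_ (Filter.Eventually.of_forall fun a => ?_)
  · exact ((hw.comp (measurable_fst.prodMk (measurable_snd.comp measurable_snd))).mul
      (measurable_fst.comp measurable_snd)).prodMk (measurable_snd.comp measurable_snd)
  · exact (mp_fst_pair μ μ (fun c => w a c)
      (hw.comp (measurable_const.prodMk measurable_id))).map_eq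

/-- Move of type C : multiply the third coordinate of a triple on the left by a word in
the other coordinates. -/
lemma moveC (w : G → G → G) (hw : Measurable fun p : G × G => w p.1 p.2) :
    MeasurePreserving (fun p : G × G × G => (p.1, p.2.1, w p.1 p.2.1 * p.2.2))
      (μ.prod (μ.prod μ)) (μ.prod (μ.prod μ)) := by
  refine (MeasurePreserving.id μ).skew_product
    (g := fun (a : G) (r : G × G) => (r.1, w a r.1 * r.2)) ?_ (Filter.Eventually.of_forall fun a => ?_)
  · exact (measurable_fst.comp measurable_snd).prodMk
      (((hw.comp (measurable_fst.prodMk (measurable_fst.comp measurable_snd))).mul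
        (measurable_snd.comp measurable_snd)))
  · exact (mp_snd_pair μ μ (fun b => w a b)
      (hw.comp (measurable_const.prodMk measurable_id))).map_eq

/-- Swapping the first two coordinates of a triple is measure preserving. -/
lemma movePerm :
    MeasurePreserving (fun p : G × G × G => (p.2.1, p.1, p.2.2))
      (μ.prod (μ.prod μ)) (μ.prod (μ.prod μ)) := by
  have h := (measurePreserving_prodAssoc μ μ μ).comp
    (((Measure.measurePreserving_swap (μ := μ) (ν := μ)).prod (MeasurePreserving.id μ)).comp
      ((measurePreserving_prodAssoc μ μ μ).symm MeasurableEquiv.prodAssoc))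
  exact h

/-- The key identity : the word measure of `b²c²a²` equals the word measure of
`a²[b,c]`, via an explicit chain of Nielsen moves. -/
lemma key :
    Measure.map (fun p : G × G × G => p.2.1 * p.2.1 * (p.2.2 * p.2.2) * (p.1 * p.1))
        (μ.prod (μ.prod μ)) =
      Measure.map (fun p : G × G × G => p.1 * p.1 * (p.2.1 * p.2.2 * p.2.1⁻¹ * p.2.2⁻¹))
        (μ.prod (μ.prod μ)) := by
  classical
  -- the nine elementary measure preserving moves
  have h1 := moveB μ (fun a _ => a⁻¹) (measurable_fst.inv)
  have h2 := moveA μ (fun r => r.1) measurable_fst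
  have h3 := moveC μ (fun _ b => b⁻¹) (measurable_snd.inv)
  have h4 := moveA μ (fun r => r.2⁻¹) measurable_snd.inv
  have h5 := moveB μ (fun _ c => c) measurable_snd
  have h6 := moveC μ (fun a _ => a) measurable_fst
  have h7 := moveC μ (fun a _ => a) measurable_fst
  have h8 := moveB μ (fun _ c => c) measurable_snd
  have h9 := movePerm μ
  have hΦ := h1.comp (h2.comp (h3.comp (h4.comp (h5.comp (h6.comp (h7.comp (h8.comp h9)))))))
  have hW2 : Measurable (fun p : G × G × G =>
      p.1 * p.1 * (p.2.1 * p.2.2 * p.2.1⁻¹ * p.2.2⁻¹)) := by fun_prop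
  have hfun : (fun p : G × G × G => p.2.1 * p.2.1 * (p.2.2 * p.2.2) * (p.1 * p.1)) =
      (fun p : G × G × G => p.1 * p.1 * (p.2.1 * p.2.2 * p.2.1⁻¹ * p.2.2⁻¹)) ∘
        ((fun p : G × G × G => (p.1, p.1⁻¹ * p.2.1, p.2.2)) ∘
        ((fun p : G × G × G => (p.2.1 * p.1, p.2)) ∘
        ((fun p : G × G × G => (p.1, p.2.1, p.2.1⁻¹ * p.2.2)) ∘
        ((fun p : G × G × G => (p.2.2⁻¹ * p.1, p.2)) ∘
        ((fun p : G × G × G => (p.1, p.2.2 * p.2.1, p.2.2)) ∘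
        ((fun p : G × G × G => (p.1, p.2.1, p.1 * p.2.2)) ∘
        ((fun p : G × G × G => (p.1, p.2.1, p.1 * p.2.2)) ∘
        ((fun p : G × G × G => (p.1, p.2.2 * p.2.1, p.2.2)) ∘
        (fun p : G × G × G => (p.2.1, p.1, p.2.2)))))))))) := by
    funext p
    simp only [Function.comp_apply]
    group
  rw [hfun, ← Measure.map_map hW2 hΦ.measurable, hΦ.map_eq]

end Aux

/-- Let `G` be a compact group with normalized Haar measure, `η` the commutator measure
(pushforward of Haar × Haar under `(a,b) ↦ a b a⁻¹ b⁻¹`) and `κ` the square measure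
(pushforward of Haar under `a ↦ a²`).  Then `κ * η = κ * κ * κ`, where `*` denotes the
convolution of measures on `G`. -/
theorem square_conv_commutator_eq_cube
    {G : Type*} [Group G] [TopologicalSpace G] [IsTopologicalGroup G] [CompactSpace G]
    [T2Space G] [SecondCountableTopology G] [MeasurableSpace G] [BorelSpace G]
    (haar : Measure G) [IsProbabilityMeasure haar] [haar.IsMulLeftInvariant]
    (η κ : Measure G)
    (hη : η = Measure.map (fun p : G × G => p.1 * p.2 * p.1⁻¹ * p.2⁻¹) (haar.prod haar))
    (hκ : κ = Measure.map (fun a : G => a * a) haar)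
    (conv : Measure G → Measure G → Measure G)
    (hconv : ∀ a b : Measure G,
      conv a b = Measure.map (fun p : G × G => p.1 * p.2) (a.prod b)) :
    conv κ η = conv (conv κ κ) κ := by
  subst hη hκ
  simp only [hconv]
  have hm : Measurable (fun p : G × G => p.1 * p.2) := measurable_mul
  have hsq : Measurable (fun a : G => a * a) := measurable_id.mul measurable_id
  have hcom : Measurable (fun p : G × G => p.1 * p.2 * p.1⁻¹ * p.2⁻¹) := by fun_prop
  haveI : IsProbabilityMeasure (Measure.map (fun a : G => a * a) haar) :=
    Measure.isProbabilityMeasure_map hsq.aemeasurable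
  haveI : IsProbabilityMeasure
      (Measure.map (fun p : G × G => p.1 * p.2 * p.1⁻¹ * p.2⁻¹) (haar.prod haar)) :=
    Measure.isProbabilityMeasure_map hcom.aemeasurable
  rw [Measure.map_prod_map _ _ hsq hcom, Measure.map_map hm (hsq.prodMap hcom)]
  rw [Measure.map_prod_map _ _ hsq hsq, Measure.map_map hm (hsq.prodMap hsq)]
  haveI : IsProbabilityMeasure (Measure.map
      ((fun p : G × G => p.1 * p.2) ∘ Prod.map (fun a : G => a * a) (fun a : G => a * a))
      (haar.prod haar)) :=
    Measure.isProbabilityMeasure_map (hm.comp (hsq.prodMap hsq)).aemeasurable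
  rw [Measure.map_prod_map _ _ (hm.comp (hsq.prodMap hsq)) hsq,
    Measure.map_map hm ((hm.comp (hsq.prodMap hsq)).prodMap hsq)]
  rw [← (Measure.measurePreserving_swap (μ := haar) (ν := haar.prod haar)).map_eq,
    Measure.map_map (hm.comp (((hm.comp (hsq.prodMap hsq)).prodMap hsq))) measurable_swap]
  have e1 : ((fun p : G × G => p.1 * p.2) ∘
      Prod.map (fun a : G => a * a) (fun p : G × G => p.1 * p.2 * p.1⁻¹ * p.2⁻¹)) =
      (fun p : G × G × G => p.1 * p.1 * (p.2.1 * p.2.2 * p.2.1⁻¹ * p.2.2⁻¹)) := by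
    funext p; simp [Prod.map]
  have e2 : (((fun p : G × G => p.1 * p.2) ∘
      Prod.map ((fun p : G × G => p.1 * p.2) ∘
        Prod.map (fun a : G => a * a) (fun a : G => a * a)) (fun a : G => a * a)) ∘
      Prod.swap) =
      (fun p : G × G × G => p.2.1 * p.2.1 * (p.2.2 * p.2.2) * (p.1 * p.1)) := by
    funext p; simp [Prod.map]
  rw [e1, e2]
  exact (key haar).symm
end
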